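/- Let X ~ Binomial(d, p) with μ = d·p, and let Y ~ Poisson(μ). Then for every t ≥ 0, P[X ≥ μ + t] ≤ 2·P[Y ≥ μ + t]. -/

import Mathlib

open Finset

namespace DeP17



lemma hasSum_exp (x : ℝ) : HasSum (fun n : ℕ => x ^ n / n.factorial) (Real.exp x) := by
  have h := (Real.summable_pow_div_factorial x).hasSum
  have : ∑' n : ℕ, x ^ n / n.factorial = Real.exp x := by
    rw [Real.exp_eq_exp_ℝ, NormedSpace.exp_eq_tsum_div]
  rwa [this] at h

/-- Binomial upper tail. -/
noncomputable def Tb (p : ℝ) (n m : ℕ) : ℝ :=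
  ∑ k ∈ Finset.range (n + 1),
    if m ≤ k then (n.choose k : ℝ) * p ^ k * (1 - p) ^ (n - k) else 0

variable {p : ℝ}

lemma Tb_nonneg (hp0 : 0 ≤ p) (hp1 : p ≤ 1) (n m : ℕ) : 0 ≤ Tb p n m := by
  apply Finset.sum_nonneg
  intro k _
  split
  · exact mul_nonneg (mul_nonneg (Nat.cast_nonneg _) (pow_nonneg hp0 _))
      (pow_nonneg (by linarith) _)
  · exact le_rfl

lemma Tb_anti (hp0 : 0 ≤ p) (hp1 : p ≤ 1) (n m : ℕ) : Tb p n m ≤ Tb p n (m - 1) := by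
  apply Finset.sum_le_sum
  intro k _
  split
  · rw [if_pos (by omega)]
  · split
    · exact mul_nonneg (mul_nonneg (Nat.cast_nonneg _) (pow_nonneg hp0 _))
        (pow_nonneg (by linarith) _)
    · exact le_rfl


variable {p : ℝ}

lemma Tb_succ (n m : ℕ) :
    Tb p (n + 1) m = (1 - p) * Tb p n m + p * Tb p n (m - 1) := by
  set q := 1 - p with hq
  have hA : p * Tb p n (m - 1)
      = ∑ i ∈ range (n + 1), (if m ≤ i + 1 then (n.choose i : ℝ) * p ^ (i+1) * q ^ (n - i) else 0) := by
    unfold Tb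
    rw [Finset.mul_sum]
    refine Finset.sum_congr rfl fun i _ => ?_
    simp only [show (m - 1 ≤ i) ↔ (m ≤ i + 1) from by omega]
    split <;> ring
  have hB : q * Tb p n m
      = (∑ i ∈ range n, (if m ≤ i + 1 then (n.choose (i+1) : ℝ) * p ^ (i+1) * q ^ (n - i) else 0))
        + (if m ≤ 0 then q ^ (n + 1) else 0) := by
    unfold Tb
    rw [Finset.mul_sum, Finset.sum_range_succ']
    congr 1
    · refine Finset.sum_congr rfl fun i hi => ?_
      have hin : i < n := Finset.mem_range.mp hi
      split
      · rw [show n - i = (n - (i + 1)) + 1 from by omega]; ring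
      · ring
    · split
      · simp [Nat.choose_zero_right, pow_succ]; ring
      · ring
  have hBn : (∑ i ∈ range n, (if m ≤ i + 1 then (n.choose (i+1) : ℝ) * p ^ (i+1) * q ^ (n - i) else 0))
      = ∑ i ∈ range (n+1), (if m ≤ i + 1 then (n.choose (i+1) : ℝ) * p ^ (i+1) * q ^ (n - i) else 0) := by
    rw [Finset.sum_range_succ, Nat.choose_succ_self]
    simp
  have hL : Tb p (n + 1) m
      = (∑ i ∈ range (n + 1), (if m ≤ i + 1 then (n.choose i : ℝ) * p ^ (i+1) * q ^ (n - i) else 0))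
        + ((∑ i ∈ range n, (if m ≤ i + 1 then (n.choose (i+1) : ℝ) * p ^ (i+1) * q ^ (n - i) else 0))
          + (if m ≤ 0 then q ^ (n + 1) else 0)) := by
    unfold Tb
    rw [Finset.sum_range_succ']
    rw [hBn, ← add_assoc, ← Finset.sum_add_distrib]
    congr 1
    · refine Finset.sum_congr rfl fun i _ => ?_
      have hch : (((n+1).choose (i+1) : ℕ) : ℝ) = (n.choose i : ℝ) + (n.choose (i+1) : ℝ) := by
        rw [Nat.choose_succ_succ]; push_cast; ring
      rw [Nat.succ_sub_succ]
      split
      · rw [hch]; ring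
      · simp
    · split <;> simp [hq]
  linarith

lemma Tb_mono (hp0 : 0 ≤ p) (hp1 : p ≤ 1) {a b : ℕ} (h : a ≤ b) (m : ℕ) :
    Tb p a m ≤ Tb p b m := by
  induction b with
  | zero => rw [Nat.le_zero.mp h]
  | succ b ih =>
    rcases Nat.lt_or_ge a (b + 1) with hab | hab
    · have h1 : Tb p a m ≤ Tb p b m := ih (by omega)
      have h2 : Tb p b m ≤ Tb p (b + 1) m := by
        rw [Tb_succ]
        nlinarith [Tb_anti (p := p) hp0 hp1 b m]
      linarith
    · have : a = b + 1 := by omega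
      rw [this]

lemma fact_le (d : ℕ) : ∀ j, j < d → (d + j).factorial ≤ d ^ (2*j+1) * (d - 1 - j).factorial := by
  intro j
  induction j with
  | zero =>
    intro hd
    obtain ⟨e, rfl⟩ : ∃ e, d = e + 1 := ⟨d - 1, by omega⟩
    simp [Nat.factorial_succ]
  | succ j ih =>
    intro hd
    have h1 := ih (by omega)
    have h2 : (d - 1 - j).factorial = (d - 1 - j) * (d - 1 - (j+1)).factorial := by
      rw [show d - 1 - j = (d - 1 - (j+1)) + 1 from by omega, Nat.factorial_succ]
    have h3 : (d + (j+1)) * (d - 1 - j) ≤ d * d := by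
      zify [show j ≤ d - 1 from by omega, show 1 ≤ d from by omega]
      nlinarith [sq_nonneg ((j:ℤ) + 1)]
    calc (d + (j+1)).factorial = (d + (j+1)) * (d + j).factorial := by
          rw [show d + (j+1) = (d + j) + 1 from by omega, Nat.factorial_succ]
      _ ≤ (d + (j+1)) * (d ^ (2*j+1) * (d - 1 - j).factorial) := Nat.mul_le_mul_left _ h1
      _ = (d ^ (2*j+1)) * ((d + (j+1)) * (d - 1 - j)) * (d - 1 - (j+1)).factorial := by
          rw [h2]; ring
      _ ≤ (d ^ (2*j+1)) * (d * d) * (d - 1 - (j+1)).factorial :=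
          Nat.mul_le_mul_right _ (Nat.mul_le_mul_left _ h3)
      _ = d ^ (2*(j+1)+1) * (d - 1 - (j+1)).factorial := by
          rw [show 2*(j+1)+1 = (2*j+1)+2 from by ring, pow_add]; ring

lemma poi_pair (d j : ℕ) (hj : j < d) :
    (d : ℝ) ^ (d - 1 - j) / (d - 1 - j).factorial ≤ (d : ℝ) ^ (d + j) / (d + j).factorial := by
  have hf1 : (0:ℝ) < (d - 1 - j).factorial := by exact_mod_cast (d - 1 - j).factorial_pos
  have hf2 : (0:ℝ) < (d + j).factorial := by exact_mod_cast (d + j).factorial_pos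
  rw [div_le_div_iff₀ hf1 hf2]
  have hd0 : (0:ℝ) ≤ (d:ℝ) := Nat.cast_nonneg d
  have hcast : ((d + j).factorial : ℝ) ≤ (d:ℝ) ^ (2*j+1) * (d - 1 - j).factorial := by
    have := fact_le d j hj
    push_cast at this ⊢
    exact_mod_cast this
  calc (d:ℝ) ^ (d - 1 - j) * (d + j).factorial
      ≤ (d:ℝ) ^ (d - 1 - j) * ((d:ℝ) ^ (2*j+1) * (d - 1 - j).factorial) :=
        mul_le_mul_of_nonneg_left hcast (by positivity)
    _ = (d:ℝ) ^ ((d - 1 - j) + (2*j+1)) * (d - 1 - j).factorial := by rw [pow_add]; ring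
    _ = (d:ℝ) ^ (d + j) * (d - 1 - j).factorial := by
        rw [show (d - 1 - j) + (2*j+1) = d + j from by omega]


lemma Tb_def (p : ℝ) (n m : ℕ) : Tb p n m = ∑ k ∈ Finset.range (n + 1),
    if m ≤ k then (n.choose k : ℝ) * p ^ k * (1 - p) ^ (n - k) else 0 := rfl

lemma key (d m k : ℕ) (p : ℝ) :
    HasSum (fun n : ℕ => Real.exp (-(d:ℝ)) * (d:ℝ) ^ n / n.factorial *
        (if m ≤ k ∧ k ≤ n then (n.choose k : ℝ) * p ^ k * (1 - p) ^ (n - k) else 0))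
      (if m ≤ k then Real.exp (-((d:ℝ) * p)) * ((d:ℝ) * p) ^ k / k.factorial else 0) := by
  by_cases hmk : m ≤ k
  · simp only [hmk, true_and, if_true]
    set f : ℕ → ℝ := fun n => Real.exp (-(d:ℝ)) * (d:ℝ) ^ n / n.factorial *
        (if k ≤ n then (n.choose k : ℝ) * p ^ k * (1 - p) ^ (n - k) else 0) with hf
    have hshift : HasSum (fun n => f (n + k))
        (Real.exp (-((d:ℝ) * p)) * ((d:ℝ) * p) ^ k / k.factorial) := by
      have hc : HasSum
          (fun n : ℕ => (Real.exp (-(d:ℝ)) * ((d:ℝ) * p) ^ k / k.factorial) *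
            (((d:ℝ) * (1 - p)) ^ n / n.factorial))
          ((Real.exp (-(d:ℝ)) * ((d:ℝ) * p) ^ k / k.factorial) * Real.exp ((d:ℝ) * (1 - p))) :=
        (hasSum_exp _).mul_left _
      convert hc using 1
      · funext n
        have hC : (((n + k).choose k : ℕ) : ℝ)
            = (n + k).factorial / (k.factorial * n.factorial) := by
          rw [eq_div_iff (by positivity)]
          have h := Nat.choose_mul_factorial_mul_factorial (Nat.le_add_left k n)
          rw [Nat.add_sub_cancel] at h
          push_cast [← h]
          ring
        simp only [hf, if_pos (Nat.le_add_left k n), Nat.add_sub_cancel]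
        rw [hC, pow_add, mul_pow, mul_pow]
        have hfk : (k.factorial : ℝ) ≠ 0 := by positivity
        have hfn : (n.factorial : ℝ) ≠ 0 := by positivity
        have hfnk : ((n + k).factorial : ℝ) ≠ 0 := by positivity
        field_simp
      · have hexp : Real.exp (-(d:ℝ)) * Real.exp ((d:ℝ) * (1 - p))
            = Real.exp (-((d:ℝ) * p)) := by
          rw [← Real.exp_add]; ring_nf
        rw [← hexp]; ring
    have h0 : ∑ i ∈ Finset.range k, f i = 0 := by
      apply Finset.sum_eq_zero
      intro i hi
      have : ¬ k ≤ i := by simpa using Finset.mem_range.mp hi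
      simp [hf, this]
    have := (hasSum_nat_add_iff (f := f) k).mp hshift
    rwa [h0, add_zero] at this
  · simp only [hmk, false_and, if_false, mul_zero]
    exact hasSum_zero


end DeP17

open DeP17 in
/-- De-Poissonization transfer: the upper tail of a `Binomial(d, p)` variable
with mean `μ = d·p` is at most twice the corresponding upper tail of a
`Poisson(μ)` variable.  Tails are written out explicitly via the binomial and
Poisson probability mass functions. -/
theorem stmt_17 (d : ℕ) (p : ℝ) (hp0 : 0 ≤ p) (hp1 : p ≤ 1) (t : ℝ) (ht : 0 ≤ t) :
    (∑ k ∈ Finset.range (d + 1),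
        if (d * p + t ≤ k) then (d.choose k : ℝ) * p ^ k * (1 - p) ^ (d - k) else 0)
      ≤ 2 * ∑' k : ℕ,
        if (d * p + t ≤ k) then Real.exp (-(d * p)) * (d * p) ^ k / k.factorial else 0 := by
  set m : ℕ := ⌈(d:ℝ) * p + t⌉₊ with hm
  have hcond : ∀ k : ℕ, ((d:ℝ) * p + t ≤ (k:ℝ)) ↔ m ≤ k := fun k => Nat.ceil_le.symm
  simp only [hcond]
  rw [← Tb_def]
  have hμ : (0:ℝ) ≤ (d:ℝ) * p := by positivity
  set q : ℕ → ℝ := fun k =>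
    if m ≤ k then Real.exp (-((d:ℝ) * p)) * ((d:ℝ) * p) ^ k / k.factorial else 0 with hqdef
  have hq0 : ∀ k, 0 ≤ q k := by
    intro k; simp only [hqdef]; split
    · positivity
    · exact le_rfl
  have hqs : Summable q := by
    apply Summable.of_nonneg_of_le hq0
      (fun k => ?_) (((Real.summable_pow_div_factorial ((d:ℝ) * p)).mul_left
        (Real.exp (-((d:ℝ) * p)))))
    simp only [hqdef]
    split
    · rw [mul_div_assoc]
    · positivity
  -- ENNReal setup
  set poi : ℕ → ℝ := fun n => Real.exp (-(d:ℝ)) * (d:ℝ) ^ n / n.factorial with hpoidef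
  have hpoi0 : ∀ n, 0 ≤ poi n := fun n => by simp only [hpoidef]; positivity
  set F : ℕ → ℕ → ENNReal := fun k n => ENNReal.ofReal (poi n *
    (if m ≤ k ∧ k ≤ n then (n.choose k : ℝ) * p ^ k * (1 - p) ^ (n - k) else 0)) with hFdef
  have hb0 : ∀ n k, 0 ≤ (if m ≤ k ∧ k ≤ n then (n.choose k : ℝ) * p ^ k * (1 - p) ^ (n - k) else 0) := by
    intro n k; split
    · exact mul_nonneg (mul_nonneg (Nat.cast_nonneg _) (pow_nonneg hp0 _))
        (pow_nonneg (by linarith) _)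
    · exact le_rfl
  have hkey : ∀ k, HasSum (fun n => poi n *
      (if m ≤ k ∧ k ≤ n then (n.choose k : ℝ) * p ^ k * (1 - p) ^ (n - k) else 0)) (q k) := by
    intro k
    simpa [hpoidef, hqdef] using key d m k p
  have h1 : ∀ k, ENNReal.ofReal (q k) = ∑' n, F k n := by
    intro k
    rw [← (hkey k).tsum_eq]
    exact ENNReal.ofReal_tsum_of_nonneg
      (fun n => mul_nonneg (hpoi0 n) (hb0 n k)) (hkey k).summable
  have h2 : ENNReal.ofReal (∑' k, q k) = ∑' k, ∑' n, F k n := by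
    rw [ENNReal.ofReal_tsum_of_nonneg hq0 hqs]
    exact tsum_congr h1
  have h4 : ∀ n, ∑' k, F k n = ENNReal.ofReal (poi n) * ENNReal.ofReal (Tb p n m) := by
    intro n
    rw [tsum_eq_sum (s := Finset.range (n + 1)) (fun k hk => ?_)]
    · have : ∀ k ∈ Finset.range (n + 1), F k n
          = ENNReal.ofReal (poi n) * ENNReal.ofReal
            (if m ≤ k then (n.choose k : ℝ) * p ^ k * (1 - p) ^ (n - k) else 0) := by
        intro k hk
        have hkn : k ≤ n := by simpa [Nat.lt_succ_iff] using Finset.mem_range.mp hk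
        simp only [hFdef]
        rw [ENNReal.ofReal_mul (hpoi0 n)]
        congr 1
        simp [hkn]
      rw [Finset.sum_congr rfl this, ← Finset.mul_sum]
      congr 1
      rw [Tb_def]
      rw [← ENNReal.ofReal_sum_of_nonneg]
      intro k _
      split
      · exact mul_nonneg (mul_nonneg (Nat.cast_nonneg _) (pow_nonneg hp0 _))
          (pow_nonneg (by linarith) _)
      · exact le_rfl
    · have hkn : ¬ k ≤ n := by simpa [Nat.lt_succ_iff] using hk
      simp [hFdef, hkn]
  set G : ℕ → ENNReal := fun n => if d ≤ n then ENNReal.ofReal (poi n) else 0 with hGdef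
  set H : ℕ → ENNReal := fun n => if d ≤ n then 0 else ENNReal.ofReal (poi n) with hHdef
  have h6 : ∑' n, ENNReal.ofReal (poi n) = 1 := by
    have hpois : Summable poi := by
      simpa [hpoidef, mul_div_assoc] using
        (Real.summable_pow_div_factorial ((d:ℝ))).mul_left (Real.exp (-(d:ℝ)))
    rw [← ENNReal.ofReal_tsum_of_nonneg hpoi0 hpois]
    have : ∑' n, poi n = Real.exp (-(d:ℝ)) * Real.exp (d:ℝ) := by
      simp only [hpoidef, mul_div_assoc]
      rw [tsum_mul_left, (hasSum_exp _).tsum_eq]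
    rw [this, ← Real.exp_add, neg_add_cancel, Real.exp_zero, ENNReal.ofReal_one]
  have h7 : (∑' n, G n) + (∑' n, H n) = 1 := by
    rw [← ENNReal.tsum_add, ← h6]
    apply tsum_congr
    intro n
    simp only [hGdef, hHdef]
    split <;> simp
  have h8 : ∑' n, H n = ∑ n ∈ Finset.range d, ENNReal.ofReal (poi n) := by
    rw [tsum_eq_sum (s := Finset.range d) (fun n hn => ?_)]
    · refine Finset.sum_congr rfl fun n hn => ?_
      have : ¬ d ≤ n := by simpa using Finset.mem_range.mp hn
      simp [hHdef, this]
    · have : d ≤ n := by simpa using hn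
      simp [hHdef, this]
  have h9 : (∑' n, H n) ≤ ∑' n, G n := by
    rw [h8]
    calc ∑ n ∈ Finset.range d, ENNReal.ofReal (poi n)
        = ∑ j ∈ Finset.range d, ENNReal.ofReal (poi (d - 1 - j)) :=
          (Finset.sum_range_reflect (fun n => ENNReal.ofReal (poi n)) d).symm
      _ ≤ ∑ j ∈ Finset.range d, ENNReal.ofReal (poi (d + j)) := by
          refine Finset.sum_le_sum fun j hj => ?_
          apply ENNReal.ofReal_le_ofReal
          simp only [hpoidef, mul_div_assoc]
          exact mul_le_mul_of_nonneg_left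
            (poi_pair d j (Finset.mem_range.mp hj)) (Real.exp_nonneg _)
      _ = ∑ j ∈ Finset.range d, G (d + j) := by
          refine Finset.sum_congr rfl fun j hj => ?_
          simp [hGdef]
      _ ≤ ∑' j, G (d + j) := ENNReal.sum_le_tsum _
      _ ≤ ∑' n, G n := ENNReal.tsum_comp_le_tsum_of_injective (add_right_injective d) G
  have h5 : ENNReal.ofReal (Tb p d m) * (∑' n, G n)
      ≤ ∑' n, ENNReal.ofReal (poi n) * ENNReal.ofReal (Tb p n m) := by
    rw [← ENNReal.tsum_mul_left]
    refine ENNReal.tsum_le_tsum fun n => ?_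
    simp only [hGdef]
    split
    · rename_i hdn
      calc ENNReal.ofReal (Tb p d m) * ENNReal.ofReal (poi n)
          = ENNReal.ofReal (poi n) * ENNReal.ofReal (Tb p d m) := mul_comm _ _
        _ ≤ ENNReal.ofReal (poi n) * ENNReal.ofReal (Tb p n m) :=
            mul_le_mul' le_rfl (ENNReal.ofReal_le_ofReal (Tb_mono hp0 hp1 hdn m))
    · simp
  -- assemble
  have hone : (1 : ENNReal) ≤ 2 * ∑' n, G n := by
    calc (1 : ENNReal) = (∑' n, G n) + (∑' n, H n) := h7.symm
      _ ≤ (∑' n, G n) + (∑' n, G n) := add_le_add le_rfl h9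
      _ = 2 * ∑' n, G n := (two_mul _).symm
  have hmain : ENNReal.ofReal (Tb p d m) ≤ ENNReal.ofReal (2 * ∑' k, q k) := by
    calc ENNReal.ofReal (Tb p d m) = ENNReal.ofReal (Tb p d m) * 1 := (mul_one _).symm
      _ ≤ ENNReal.ofReal (Tb p d m) * (2 * ∑' n, G n) := mul_le_mul' le_rfl hone
      _ = 2 * (ENNReal.ofReal (Tb p d m) * ∑' n, G n) := by ring
      _ ≤ 2 * ∑' n, ENNReal.ofReal (poi n) * ENNReal.ofReal (Tb p n m) :=
          mul_le_mul' le_rfl h5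
      _ = 2 * ∑' k, ∑' n, F k n := by
          congr 1
          calc ∑' n, ENNReal.ofReal (poi n) * ENNReal.ofReal (Tb p n m)
              = ∑' n, ∑' k, F k n := tsum_congr fun n => (h4 n).symm
            _ = ∑' k, ∑' n, F k n := ENNReal.tsum_comm
      _ = 2 * ENNReal.ofReal (∑' k, q k) := by rw [h2]
      _ = ENNReal.ofReal (2 * ∑' k, q k) := by
          rw [ENNReal.ofReal_mul (by norm_num)]
          norm_num
  have h2T : (0:ℝ) ≤ 2 * ∑' k, q k := by
    have : (0:ℝ) ≤ ∑' k, q k := tsum_nonneg hq0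
    linarith
  exact (ENNReal.ofReal_le_ofReal_iff h2T).mp hmain
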